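/- Probabilistic near-optimal utility of the selected modality set (regression form, additive utility): let (Ω, μ) be a probability space, p, q ≥ 1 integers, α ∈ (0,1), φ : {1,…,p} → ℝ fixed reals, and V a real-valued function on subsets of {1,…,p} with Σ_{j∈S} φ_j = V(S) for every subset S with |S| ≤ q. Let L_j, U_j : Ω → ℝ be measurable and e_j⁻, e_j⁺ ≥ 0 satisfy μ({ω : φ_j < L_j(ω)}) ≤ α/(2p) + e_j⁻ and μ({ω : φ_j > U_j(ω)}) ≤ α/(2p) + e_j⁺ for every j. Let Ŝ : Ω → (subsets of {1,…,p}) satisfy, for every ω, |Ŝ(ω)| ≤ q and Σ_{j∈S} U_j(ω) ≤ Σ_{j∈Ŝ(ω)} U_j(ω) for every subset S with |S| ≤ q, and let S* with |S*| ≤ q satisfy V(S) ≤ V(S*) for every subset S with |S| ≤ q. Then μ({ω : V(Ŝ(ω)) ≥ V(S*) − Σ_{j∈Ŝ(ω)} (U_j(ω) − L_j(ω))}) ≥ 1 − α − Σ_{j=1}^p (e_j⁻ + e_j⁺). -/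

import Mathlib

open Finset MeasureTheory

/-- Probabilistic near-optimal utility of the selected modality set (regression form,
additive utility): if each conformal interval `[L_j, U_j]` miscovers the Shapley value
`φ_j` on each side with probability at most `α/(2p)` plus slack `e_j⁻`/`e_j⁺`, the utility
`V` is exactly additive in `φ` on subsets of size at most `q`, `Ŝ(ω)` maximizes the sum of
upper bounds among subsets of size at most `q`, and `S*` maximizes `V`, then with
probability at least `1 − α − Σ_j (e_j⁻ + e_j⁺)`,
`V(Ŝ(ω)) ≥ V(S*) − Σ_{j∈Ŝ(ω)} (U_j(ω) − L_j(ω))`. -/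
theorem near_optimal_selection_regression
    {Ω : Type*} [MeasurableSpace Ω] (μ : Measure Ω) [IsProbabilityMeasure μ]
    (p q : ℕ) (hp : 1 ≤ p) (hq : 1 ≤ q) (α : ℝ) (hα : α ∈ Set.Ioo (0 : ℝ) 1)
    (φ : Fin p → ℝ) (V : Finset (Fin p) → ℝ)
    (hadd : ∀ S : Finset (Fin p), S.card ≤ q → (∑ j ∈ S, φ j) = V S)
    (L U : Fin p → Ω → ℝ) (hLmeas : ∀ j, Measurable (L j)) (hUmeas : ∀ j, Measurable (U j))
    (em ep : Fin p → ℝ) (hem : ∀ j, 0 ≤ em j) (hep : ∀ j, 0 ≤ ep j)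
    (hcovL : ∀ j, μ {ω | φ j < L j ω} ≤ ENNReal.ofReal (α / (2 * p) + em j))
    (hcovU : ∀ j, μ {ω | φ j > U j ω} ≤ ENNReal.ofReal (α / (2 * p) + ep j))
    (Shat : Ω → Finset (Fin p)) (hShatCard : ∀ ω, (Shat ω).card ≤ q)
    (hShatMax : ∀ ω, ∀ S : Finset (Fin p), S.card ≤ q →
      (∑ j ∈ S, U j ω) ≤ ∑ j ∈ Shat ω, U j ω)
    (Sstar : Finset (Fin p)) (hSstarCard : Sstar.card ≤ q)
    (hSstarMax : ∀ S : Finset (Fin p), S.card ≤ q → V S ≤ V Sstar) :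
    μ {ω | V (Shat ω) ≥ V Sstar - ∑ j ∈ Shat ω, (U j ω - L j ω)} ≥
      ENNReal.ofReal (1 - α - ∑ j, (em j + ep j)) := by
  obtain ⟨hα0, hα1⟩ := hα
  have hp0 : (0:ℝ) < p := by exact_mod_cast hp
  set G : Set Ω := {ω | ∀ j, L j ω ≤ φ j ∧ φ j ≤ U j ω} with hG
  have hsub : G ⊆ {ω | V (Shat ω) ≥ V Sstar - ∑ j ∈ Shat ω, (U j ω - L j ω)} := by
    intro ω hω
    have h2 : ∑ j ∈ Shat ω, U j ω - ∑ j ∈ Shat ω, (U j ω - L j ω) ≤ V (Shat ω) := by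
      rw [← hadd _ (hShatCard ω), ← Finset.sum_sub_distrib]
      exact Finset.sum_le_sum fun j _ => by have := (hω j).1; linarith
    have h3 : V Sstar ≤ ∑ j ∈ Sstar, U j ω := by
      rw [← hadd _ hSstarCard]
      exact Finset.sum_le_sum fun j _ => (hω j).2
    have h4 := hShatMax ω Sstar hSstarCard
    simp only [Set.mem_setOf_eq, ge_iff_le]
    linarith
  have hGc : μ Gᶜ ≤ ENNReal.ofReal (α + ∑ j, (em j + ep j)) := by
    have hcsub : Gᶜ ⊆ ⋃ j, ({ω | φ j < L j ω} ∪ {ω | φ j > U j ω}) := by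
      intro ω hω
      simp only [hG, Set.mem_compl_iff, Set.mem_setOf_eq, not_forall] at hω
      obtain ⟨j, hj⟩ := hω
      rw [not_and_or, not_le, not_le] at hj
      exact Set.mem_iUnion.2 ⟨j, hj.elim Or.inl Or.inr⟩
    calc μ Gᶜ ≤ ∑ j, μ ({ω | φ j < L j ω} ∪ {ω | φ j > U j ω}) :=
          le_trans (measure_mono hcsub) (measure_iUnion_fintype_le _ _)
      _ ≤ ∑ j, (ENNReal.ofReal (α / (2 * p) + em j) + ENNReal.ofReal (α / (2 * p) + ep j)) :=
          Finset.sum_le_sum fun j _ =>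
            le_trans (measure_union_le _ _) (add_le_add (hcovL j) (hcovU j))
      _ = ENNReal.ofReal (α + ∑ j, (em j + ep j)) := by
          have hnn : ∀ j : Fin p, (0:ℝ) ≤ α / (2 * p) + em j := fun j => by
            have := hem j; positivity
          have hnn' : ∀ j : Fin p, (0:ℝ) ≤ α / (2 * p) + ep j := fun j => by
            have := hep j; positivity
          rw [show (∑ j : Fin p, (ENNReal.ofReal (α / (2 * p) + em j) +
              ENNReal.ofReal (α / (2 * p) + ep j))) =
              ∑ j : Fin p, ENNReal.ofReal ((α / (2 * p) + em j) + (α / (2 * p) + ep j)) from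
            Finset.sum_congr rfl fun j _ => (ENNReal.ofReal_add (hnn j) (hnn' j)).symm,
            ← ENNReal.ofReal_sum_of_nonneg (fun j _ => add_nonneg (hnn j) (hnn' j))]
          congr 1
          rw [Finset.sum_add_distrib, Finset.sum_add_distrib, Finset.sum_add_distrib,
            Finset.sum_const, Finset.card_univ, Fintype.card_fin]
          field_simp
          rw [Finset.sum_add_distrib]
          ring_nf
          rw [mul_inv_cancel_right₀ hp0.ne']
  have hunion : (1:ENNReal) ≤ μ G + μ Gᶜ := by
    have := measure_union_le (μ := μ) G Gᶜ
    rwa [Set.union_compl_self, measure_univ] at this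
  have hsum_nn : (0:ℝ) ≤ α + ∑ j, (em j + ep j) := by
    have : (0:ℝ) ≤ ∑ j, (em j + ep j) :=
      Finset.sum_nonneg fun j _ => add_nonneg (hem j) (hep j)
    linarith
  calc ENNReal.ofReal (1 - α - ∑ j, (em j + ep j))
      = 1 - ENNReal.ofReal (α + ∑ j, (em j + ep j)) := by
        rw [show (1:ℝ) - α - ∑ j, (em j + ep j) = 1 - (α + ∑ j, (em j + ep j)) by ring,
          ENNReal.ofReal_sub _ hsum_nn, ENNReal.ofReal_one]
    _ ≤ 1 - μ Gᶜ := tsub_le_tsub_left hGc 1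
    _ ≤ μ G := tsub_le_iff_right.2 hunion
    _ ≤ _ := measure_mono hsub
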